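/- Let X ∈ ℝ^{n×d} with n ≥ 2 and r = rank(X) ≥ 1. Then the set of activation patterns 𝒟_X = {diag(1(X u ≥ 0)) : u ∈ ℝ^d} is finite and satisfies |𝒟_X| ≤ 2 r (e (n − 1) / r)^r. -/

import Mathlib

open scoped BigOperators
open Finset

lemma sum_choose_le_pow (n r : ℕ) (h1 : 1 ≤ r) (hrn : r ≤ n) :
    (∑ k ∈ Iic r, (n.choose k : ℝ)) ≤ (Real.exp 1 * n / r) ^ r := by
  have hn0 : (0:ℝ) < n := Nat.cast_pos.mpr (by omega)
  have hr0 : (0:ℝ) < r := by exact_mod_cast h1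
  set x : ℝ := r / n with hx
  have hx0 : 0 < x := by positivity
  have hx1 : x ≤ 1 := by
    rw [hx, div_le_one hn0]; exact_mod_cast hrn
  have key : (∑ k ∈ Iic r, (n.choose k : ℝ)) * x ^ r ≤ Real.exp 1 ^ r := by
    have h1' : (∑ k ∈ Iic r, (n.choose k : ℝ)) * x ^ r
        = ∑ k ∈ Iic r, (n.choose k : ℝ) * x ^ r := by rw [Finset.sum_mul]
    have h2 : ∑ k ∈ Iic r, (n.choose k : ℝ) * x ^ r ≤ ∑ k ∈ Iic r, (n.choose k : ℝ) * x ^ k := by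
      apply Finset.sum_le_sum
      intro k hk
      have : x ^ r ≤ x ^ k := pow_le_pow_of_le_one hx0.le hx1 (mem_Iic.mp hk)
      exact mul_le_mul_of_nonneg_left this (by positivity)
    have h3 : ∑ k ∈ Iic r, (n.choose k : ℝ) * x ^ k ≤ ∑ k ∈ range (n+1), (n.choose k : ℝ) * x ^ k := by
      apply Finset.sum_le_sum_of_subset_of_nonneg
      · intro k hk; simp only [mem_Iic, mem_range] at *; omega
      · intro k _ _; positivity
    have h4 : ∑ k ∈ range (n+1), (n.choose k : ℝ) * x ^ k = (1 + x) ^ n := by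
      rw [add_comm (1:ℝ) x, add_pow]
      simp [mul_comm, mul_assoc]
    have h5 : (1 + x) ^ n ≤ Real.exp x ^ n := by
      apply pow_le_pow_left₀ (by positivity)
      linarith [Real.add_one_le_exp x]
    have h6 : Real.exp x ^ n = Real.exp (x * n) := by
      rw [← Real.exp_nat_mul]; ring_nf
    have h7 : x * n = r := by rw [hx, div_mul_cancel₀ _ hn0.ne']
    calc (∑ k ∈ Iic r, (n.choose k : ℝ)) * x ^ r = _ := h1'
      _ ≤ _ := h2
      _ ≤ _ := h3
      _ = (1+x)^n := h4
      _ ≤ Real.exp x ^ n := h5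
      _ = Real.exp (x*n) := h6
      _ = Real.exp 1 ^ r := by rw [h7, ← Real.exp_nat_mul, mul_one]
  have hxr : 0 < x ^ r := by positivity
  rw [← le_div_iff₀ hxr] at key
  have heq : Real.exp 1 ^ r / x ^ r = (Real.exp 1 * n / r) ^ r := by
    rw [← div_pow]
    congr 1
    rw [hx]
    field_simp
  exact key.trans heq.le

lemma ratio_pow_le (n r : ℕ) (h1 : 1 ≤ r) (hrn : r ≤ n) (hn : 2 ≤ n) :
    ((n:ℝ)/((n:ℝ)-1)) ^ r ≤ 2 * r := by
  have hn2 : (2:ℝ) ≤ n := by exact_mod_cast hn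
  have hn1' : (0:ℝ) < (n:ℝ) - 1 := by linarith
  set a : ℝ := (n:ℝ)/((n:ℝ)-1) with ha
  have ha1 : 1 ≤ a := by rw [ha, le_div_iff₀ hn1']; linarith
  have ha2 : a ≤ 2 := by rw [ha, div_le_iff₀ hn1']; linarith
  rcases Nat.lt_or_ge r 4 with h4 | h4
  · interval_cases r
    · push_cast; nlinarith
    · push_cast; nlinarith
    · have hn3 : (3:ℝ) ≤ n := by
        have : 3 ≤ n := le_trans (by norm_num) hrn
        exact_mod_cast this
      have ha32 : a ≤ 3/2 := by rw [ha, div_le_iff₀ hn1']; linarith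
      have hcube : a ^ 3 ≤ (3/2:ℝ) ^ 3 := pow_le_pow_left₀ (by linarith) ha32 3
      push_cast; nlinarith
  · have hrn' : (r:ℝ) ≤ n := by exact_mod_cast hrn
    have hr4 : (4:ℝ) ≤ r := by exact_mod_cast h4
    have hae : a ≤ Real.exp (1/((n:ℝ)-1)) := by
      have h := Real.add_one_le_exp (1/((n:ℝ)-1))
      have : a = 1/((n:ℝ)-1) + 1 := by rw [ha]; field_simp; ring
      linarith
    have h2 : a ^ r ≤ Real.exp (1/((n:ℝ)-1)) ^ r :=
      pow_le_pow_left₀ (by linarith) hae r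
    have h3 : Real.exp (1/((n:ℝ)-1)) ^ r = Real.exp ((r:ℝ)/((n:ℝ)-1)) := by
      rw [← Real.exp_nat_mul]; congr 1; field_simp
    have h4' : (r:ℝ)/((n:ℝ)-1) ≤ 2 := by rw [div_le_iff₀ hn1']; linarith
    have h5 : Real.exp ((r:ℝ)/((n:ℝ)-1)) ≤ Real.exp 2 := Real.exp_le_exp.mpr h4'
    have h6 : Real.exp 2 ≤ 8 := le_of_lt (by
      have he := Real.exp_one_lt_d9
      have : Real.exp 2 = Real.exp 1 * Real.exp 1 := by
        rw [← Real.exp_add]; norm_num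
      nlinarith [Real.exp_pos 1])
    calc a ^ r ≤ Real.exp ((r:ℝ)/((n:ℝ)-1)) := by rw [← h3]; exact h2
      _ ≤ Real.exp 2 := h5
      _ ≤ 8 := h6
      _ ≤ 2 * r := by linarith

lemma pow_en_le (n r : ℕ) (h1 : 1 ≤ r) (hrn : r ≤ n) (hn : 2 ≤ n) :
    (Real.exp 1 * n / r) ^ r ≤ 2 * r * (Real.exp 1 * ((n:ℝ)-1) / r) ^ r := by
  have hn2 : (2:ℝ) ≤ n := by exact_mod_cast hn
  have hn1' : (0:ℝ) < (n:ℝ) - 1 := by linarith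
  have hr0 : (0:ℝ) < r := by exact_mod_cast h1
  have key : Real.exp 1 * n / r = (Real.exp 1 * ((n:ℝ)-1) / r) * ((n:ℝ)/((n:ℝ)-1)) := by
    field_simp
  rw [key, mul_pow]
  have hb : (0:ℝ) ≤ (Real.exp 1 * ((n:ℝ)-1) / r) ^ r := by positivity
  have := ratio_pow_le n r h1 hrn hn
  calc (Real.exp 1 * ((n:ℝ)-1) / r) ^ r * ((n:ℝ)/((n:ℝ)-1)) ^ r
      ≤ (Real.exp 1 * ((n:ℝ)-1) / r) ^ r * (2*r) := by
        exact mul_le_mul_of_nonneg_left this hb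
    _ = 2 * r * (Real.exp 1 * ((n:ℝ)-1) / r) ^ r := by ring

lemma shatters_card_le (n d : ℕ) (X : Matrix (Fin n) (Fin d) ℝ)
    (𝒜 : Finset (Finset (Fin n)))
    (h𝒜 : ∀ S ∈ 𝒜, ∃ u : Fin d → ℝ, ∀ j, j ∈ S ↔ 0 ≤ X.mulVec u j)
    (T : Finset (Fin n)) (hT : 𝒜.Shatters T) : T.card ≤ X.rank := by
  classical
  by_contra hlt
  push_neg at hlt
  -- rows indexed by T are linearly dependent
  have hdep : ¬ LinearIndependent ℝ (fun j : {x // x ∈ T} => X j) := by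
    intro hli
    set W : Submodule ℝ (Fin d → ℝ) := Submodule.span ℝ (Set.range X) with hW
    have hmem : ∀ j : {x // x ∈ T}, X j ∈ W :=
      fun j => Submodule.subset_span (Set.mem_range_self _)
    have hli' : LinearIndependent ℝ (fun j : {x // x ∈ T} => (⟨X j, hmem j⟩ : W)) := by
      apply LinearIndependent.of_comp W.subtype
      exact hli
    have hcard := hli'.fintype_card_le_finrank
    rw [Fintype.card_coe] at hcard
    rw [X.rank_eq_finrank_span_row] at hlt; change Module.finrank ℝ W < _ at hlt
    omega
  rw [Fintype.not_linearIndependent_iff] at hdep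
  obtain ⟨g, hsum, i₀, hi₀⟩ := hdep
  set c : Fin n → ℝ := fun j => if h : j ∈ T then g ⟨j, h⟩ else 0 with hc
  have hsum' : ∑ j ∈ T, c j • X j = 0 := by
    rw [← Finset.sum_attach T (fun j => c j • X j)]
    rw [← hsum]
    apply Finset.sum_congr rfl
    intro i _
    simp [hc, i.2]
  have hcoord : ∀ k, ∑ j ∈ T, c j * X j k = 0 := by
    intro k
    have := congrFun hsum' k
    simpa using this
  have hkey : ∀ u : Fin d → ℝ, ∑ j ∈ T, c j * X.mulVec u j = 0 := by
    intro u
    calc ∑ j ∈ T, c j * X.mulVec u j = ∑ j ∈ T, ∑ k, (c j * X j k) * u k := by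
          simp [Matrix.mulVec, dotProduct, Finset.mul_sum, mul_assoc]
      _ = ∑ k, ∑ j ∈ T, (c j * X j k) * u k := Finset.sum_comm
      _ = ∑ k, (∑ j ∈ T, c j * X j k) * u k := by simp [Finset.sum_mul]
      _ = 0 := by simp [hcoord]
  set P : Finset (Fin n) := T.filter (fun j => 0 < c j) with hP
  rcases (T.filter (fun j => c j < 0)).eq_empty_or_nonempty with hN | hN
  · -- all coefficients nonnegative on T; use trace ∅
    have hnonneg : ∀ j ∈ T, 0 ≤ c j := by
      intro j hj
      by_contra h
      push_neg at h
      have : j ∈ T.filter (fun j => c j < 0) := mem_filter.mpr ⟨hj, h⟩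
      simp [hN] at this
    obtain ⟨S, hS𝒜, hTS⟩ := hT (Finset.empty_subset T)
    obtain ⟨u, hu⟩ := h𝒜 S hS𝒜
    have hvneg : ∀ j ∈ T, X.mulVec u j < 0 := by
      intro j hj
      by_contra h
      push_neg at h
      have : j ∈ T ∩ S := mem_inter.mpr ⟨hj, (hu j).mpr h⟩
      rw [hTS] at this
      exact absurd this (notMem_empty j)
    have hpos : 0 < ∑ j ∈ T, -(c j * X.mulVec u j) := by
      apply Finset.sum_pos'
      · intro j hj
        have h1 := hnonneg j hj
        have h2 := hvneg j hj
        nlinarith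
      · refine ⟨i₀, i₀.2, ?_⟩
        have hci : 0 < c i₀ := by
          have h1 := hnonneg i₀ i₀.2
          have : c i₀ = g i₀ := by simp [hc, i₀.2]
          rcases h1.lt_or_eq with h | h
          · exact h
          · exact absurd (by rw [this] at h; exact h.symm) hi₀
        have h2 := hvneg i₀ i₀.2
        nlinarith
    rw [Finset.sum_neg_distrib, hkey u] at hpos
    simp at hpos
  · -- some negative coefficient; use trace P
    obtain ⟨S, hS𝒜, hTS⟩ := hT (Finset.filter_subset _ T : P ⊆ T)
    obtain ⟨u, hu⟩ := h𝒜 S hS𝒜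
    have hiff : ∀ j ∈ T, (0 < c j ↔ 0 ≤ X.mulVec u j) := by
      intro j hj
      constructor
      · intro h
        have : j ∈ T ∩ S := by rw [hTS]; exact mem_filter.mpr ⟨hj, h⟩
        exact (hu j).mp (mem_inter.mp this).2
      · intro h
        have : j ∈ T ∩ S := mem_inter.mpr ⟨hj, (hu j).mpr h⟩
        rw [hTS] at this
        exact (mem_filter.mp this).2
    have hpos : 0 < ∑ j ∈ T, c j * X.mulVec u j := by
      apply Finset.sum_pos'
      · intro j hj
        rcases lt_trichotomy (c j) 0 with h | h | h
        · have hv : X.mulVec u j < 0 := by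
            by_contra hv
            push_neg at hv
            have := (hiff j hj).mpr hv
            linarith
          nlinarith
        · simp [h]
        · have hv := (hiff j hj).mp h
          positivity
      · obtain ⟨j₀, hj₀⟩ := hN
        rw [mem_filter] at hj₀
        refine ⟨j₀, hj₀.1, ?_⟩
        have hv : X.mulVec u j₀ < 0 := by
          by_contra hv
          push_neg at hv
          have := (hiff j₀ hj₀.1).mpr hv
          linarith [hj₀.2]
        nlinarith [hj₀.2]
    rw [hkey u] at hpos
    simp at hpos

/-- The set of activation-pattern diagonal boolean matrices
`𝒟_X = {diag(1(Xu ≥ 0)) : u ∈ ℝ^d}` is finite, with cardinality at most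
`2 r (e (n - 1) / r)^r` where `r = rank X ≥ 1` and `n ≥ 2`. -/
theorem stmt_6 (n d : ℕ) (hn : 2 ≤ n) (X : Matrix (Fin n) (Fin d) ℝ)
    (hr : 1 ≤ X.rank) :
    ({D : Matrix (Fin n) (Fin n) ℝ | ∃ u : Fin d → ℝ,
        D = Matrix.diagonal fun j => if 0 ≤ X.mulVec u j then (1 : ℝ) else 0}).Finite ∧
    (({D : Matrix (Fin n) (Fin n) ℝ | ∃ u : Fin d → ℝ,
        D = Matrix.diagonal fun j => if 0 ≤ X.mulVec u j then (1 : ℝ) else 0}).ncard : ℝ) ≤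
      2 * (X.rank : ℝ) * (Real.exp 1 * ((n : ℝ) - 1) / (X.rank : ℝ)) ^ (X.rank) := by
  classical
  set r := X.rank with hrdef
  have hrn : r ≤ n := by
    have := X.rank_le_card_height
    simpa using this
  set 𝒜 : Finset (Finset (Fin n)) :=
    Finset.univ.filter (fun S : Finset (Fin n) =>
      ∃ u : Fin d → ℝ, S = Finset.univ.filter (fun j => 0 ≤ X.mulVec u j)) with h𝒜def
  set g : Finset (Fin n) → Matrix (Fin n) (Fin n) ℝ :=
    fun S => Matrix.diagonal (fun j => if j ∈ S then (1:ℝ) else 0) with hg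
  have hset : {D : Matrix (Fin n) (Fin n) ℝ | ∃ u : Fin d → ℝ,
      D = Matrix.diagonal fun j => if 0 ≤ X.mulVec u j then (1 : ℝ) else 0} = g '' ↑𝒜 := by
    ext D
    constructor
    · rintro ⟨u, rfl⟩
      refine ⟨Finset.univ.filter (fun j => 0 ≤ X.mulVec u j), ?_, ?_⟩
      · simp only [h𝒜def, Finset.coe_filter, Finset.mem_univ, true_and, Set.mem_setOf_eq]
        exact ⟨u, rfl⟩
      · simp only [hg]
        congr 1
        funext j
        simp [Finset.mem_filter]
    · rintro ⟨S, hS, rfl⟩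
      simp only [h𝒜def, Finset.coe_filter, Finset.mem_univ, true_and, Set.mem_setOf_eq] at hS
      obtain ⟨u, rfl⟩ := hS
      refine ⟨u, ?_⟩
      simp only [hg]
      congr 1
      funext j
      simp [Finset.mem_filter]
  rw [hset]
  refine ⟨Set.Finite.image g 𝒜.finite_toSet, ?_⟩
  have hcard1 : (g '' ↑𝒜).ncard ≤ 𝒜.card := by
    calc (g '' ↑𝒜).ncard ≤ (↑𝒜 : Set (Finset (Fin n))).ncard := Set.ncard_image_le 𝒜.finite_toSet
      _ = 𝒜.card := Set.ncard_coe_finset 𝒜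
  -- VC bound
  have hpat : ∀ S ∈ 𝒜, ∃ u : Fin d → ℝ, ∀ j, j ∈ S ↔ 0 ≤ X.mulVec u j := by
    intro S hS
    simp only [h𝒜def, Finset.mem_filter, Finset.mem_univ, true_and] at hS
    obtain ⟨u, rfl⟩ := hS
    exact ⟨u, fun j => by simp [Finset.mem_filter]⟩
  have hvc : 𝒜.vcDim ≤ r := by
    apply Finset.sup_le
    intro s hs
    exact shatters_card_le n d X 𝒜 hpat s (Finset.mem_shatterer.1 hs)
  have hcard2 : 𝒜.card ≤ ∑ k ∈ Finset.Iic r, n.choose k := by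
    calc 𝒜.card ≤ 𝒜.shatterer.card := Finset.card_le_card_shatterer 𝒜
      _ ≤ ∑ k ∈ Finset.Iic 𝒜.vcDim, (Fintype.card (Fin n)).choose k :=
          Finset.card_shatterer_le_sum_vcDim
      _ ≤ ∑ k ∈ Finset.Iic r, (Fintype.card (Fin n)).choose k := by
          apply Finset.sum_le_sum_of_subset
          intro k hk
          simp only [Finset.mem_Iic] at *
          omega
      _ = ∑ k ∈ Finset.Iic r, n.choose k := by simp
  have hreal : ((g '' ↑𝒜).ncard : ℝ) ≤ ∑ k ∈ Finset.Iic r, (n.choose k : ℝ) := by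
    exact_mod_cast le_trans hcard1 hcard2
  calc ((g '' ↑𝒜).ncard : ℝ) ≤ ∑ k ∈ Finset.Iic r, (n.choose k : ℝ) := hreal
    _ ≤ (Real.exp 1 * n / r) ^ r := sum_choose_le_pow n r hr hrn
    _ ≤ 2 * r * (Real.exp 1 * ((n:ℝ)-1) / r) ^ r := pow_en_le n r hr hrn hn
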